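/- For a Reed–Solomon code (n, k, t)_{2^m} with t = ⌊(n−k)/2⌋, if at most t of the n encoded symbols in E' differ from the encoded codeword E = encode(K), then decode(E') = K. -/
import Mathlib


/-- For a Reed–Solomon code over `GF(2^m)` mapping `k` symbols to `n` symbols
(`k ≤ n ≤ 2^m`) with the MDS property (minimum distance `n - k + 1`) and
nearest-codeword decoding, if at most `t = ⌊(n-k)/2⌋` of the `n` symbols of `E'`
differ from `encode K`, then `decode E' = K`. -/
theorem reedSolomon_decode_correct {F : Type*} [Field F] [Fintype F] [DecidableEq F]
    (m n k : ℕ) (hcard : Fintype.card F = 2 ^ m) (hkn : k ≤ n) (hn : n ≤ 2 ^ m)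
    (encode : (Fin k → F) → Fin n → F) (decode : (Fin n → F) → Fin k → F)
    (hMDS : ∀ K K' : Fin k → F, K ≠ K' → n - k + 1 ≤ hammingDist (encode K) (encode K'))
    (hnearest : ∀ (E' : Fin n → F) (K' : Fin k → F),
      hammingDist (encode (decode E')) E' ≤ hammingDist (encode K') E')
    (t : ℕ) (ht : t = (n - k) / 2)
    (K : Fin k → F) (E' : Fin n → F)
    (hE : hammingDist (encode K) E' ≤ t) :
    decode E' = K := by
  by_contra hne
  have h1 : n - k + 1 ≤ hammingDist (encode (decode E')) (encode K) := hMDS _ _ hne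
  have h2 := hnearest E' K
  have h3 : hammingDist (encode (decode E')) (encode K) ≤
      hammingDist (encode (decode E')) E' + hammingDist E' (encode K) :=
    hammingDist_triangle _ _ _
  rw [hammingDist_comm E'] at h3
  have h4 : hammingDist (encode (decode E')) (encode K) ≤ t + t :=
    h3.trans (Nat.add_le_add (h2.trans hE) hE)
  have : t + t ≤ n - k := by omega
  omega
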